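/- Let k ≥ 1 be an integer, λ, γ > 0, and u ≥ 0. Let a^{(k+1)}_{ℓ,w}(u) = [w ≥ ℓ] · (u + λ(k+1−w)w + γw)⁻¹ · ∏_{j=ℓ}^{w−1} (1 + (u + γj)/(λ(k+1−j)j))⁻¹ for ℓ, w ∈ {1,…,k+1}. Then for every ℓ ∈ {1,…,k+1}: (a) for every i ∈ {1,…,k+1}, the ((k+1−ℓ,ℓ),(k+1−i,i)) entry of Q̂_{k+1,λ,γ}(u) equals a^{(k+1)}_{ℓ,i}(u); and (b) for every (s,i) ∈ Ω(k) (i.e. with s + i ≤ k), the ((k+1−ℓ,ℓ),(s,i)) entry of Q̂_{k+1,λ,γ}(u) equals Σ_{w=2}^{k+1} a^{(k+1)}_{ℓ,w}(u) · γw · (Q̂_{k,λ,γ}(u))_{(k+1−w,w−1),(s,i)}. -/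

import Mathlib

open Finset

/-- `Omega k` is the set of transient states `(s,i)` of the SIR epidemic in a closed
population of size `k`: `s + i ≤ k` and `i ≥ 1`. -/
def Omega (k : ℕ) : Finset (ℕ × ℕ) :=
  (range (k + 1) ×ˢ range (k + 1)).filter (fun p => p.1 + p.2 ≤ k ∧ 1 ≤ p.2)

lemma mem_Omega {k : ℕ} {p : ℕ × ℕ} : p ∈ Omega k ↔ p.1 + p.2 ≤ k ∧ 1 ≤ p.2 := by
  simp only [Omega, Finset.mem_filter, Finset.mem_product, Finset.mem_range]
  omega

lemma pair_mem_Omega {k s i : ℕ} (h1 : s + i ≤ k) (h2 : 1 ≤ i) : (s, i) ∈ Omega k :=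
  mem_Omega.mpr ⟨h1, h2⟩

lemma mem_Omega' {k s i : ℕ} : (s, i) ∈ Omega k ↔ s + i ≤ k ∧ 1 ≤ i := mem_Omega

/-- The restriction `Q_{λ,γ}(k)` to the transient states `Omega k` of the generator of the
SIR Markov chain in a closed population of size `k`, with one-to-one infection rate `lam`
and recovery rate `gam`. -/
noncomputable def Qmat (k : ℕ) (lam gam : ℝ) :
    Matrix {p // p ∈ Omega k} {p // p ∈ Omega k} ℝ :=
  fun x y =>
    if y.val = x.val then -(lam * x.val.1 * x.val.2 + gam * x.val.2)
    else if y.val = (x.val.1 - 1, x.val.2 + 1) then lam * x.val.1 * x.val.2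
    else if y.val = (x.val.1, x.val.2 - 1) then gam * x.val.2
    else 0

/-- The resolvent matrix `Q̂_{k,λ,γ}(u) = (u·I − Q_{λ,γ}(k))⁻¹`. -/
noncomputable def Qhat (k : ℕ) (lam gam u : ℝ) :
    Matrix {p // p ∈ Omega k} {p // p ∈ Omega k} ℝ :=
  (u • (1 : Matrix {p // p ∈ Omega k} {p // p ∈ Omega k} ℝ) - Qmat k lam gam)⁻¹



/-- `a^{(n)}_{ℓ,w}(u) = [w ≥ ℓ] (u + λ(n−w)w + γw)⁻¹ ∏_{j=ℓ}^{w−1} (1 + (u+γj)/(λ(n−j)j))⁻¹`. -/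
noncomputable def afun (n : ℕ) (lam gam u : ℝ) (ℓ w : ℕ) : ℝ :=
  (if ℓ ≤ w then (1 : ℝ) else 0) *
    (u + lam * ((n : ℝ) - (w : ℝ)) * (w : ℝ) + gam * (w : ℝ))⁻¹ *
    ∏ j ∈ Finset.Icc ℓ (w - 1),
      (1 + (u + gam * (j : ℝ)) / (lam * ((n : ℝ) - (j : ℝ)) * (j : ℝ)))⁻¹


section Helpers

variable {k : ℕ} {lam gam u : ℝ}

abbrev St (k : ℕ) := {p // p ∈ Omega k}

/-- The matrix `u·I − Q`. -/
noncomputable def Mk (k : ℕ) (lam gam u : ℝ) : Matrix (St k) (St k) ℝ :=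
  u • (1 : Matrix (St k) (St k) ℝ) - Qmat k lam gam

lemma Qhat_eq_inv (k : ℕ) (lam gam u : ℝ) : Qhat k lam gam u = (Mk k lam gam u)⁻¹ := rfl

lemma sum_val_eq (k : ℕ) (v : ℕ × ℕ) (c : ℝ) (f : St k → ℝ) :
    ∑ y : St k, (if y.val = v then c else 0) * f y =
      if h : v ∈ Omega k then c * f ⟨v, h⟩ else 0 := by
  split_ifs with h
  · have hiff : ∀ y : St k, (y.val = v) ↔ (y = ⟨v, h⟩) := fun y => by
      simp [Subtype.ext_iff]
    simp_rw [hiff, ite_mul, zero_mul]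
    simp [Finset.sum_ite_eq' Finset.univ (⟨v, h⟩ : St k) (fun y => c * f y)]
  · apply Finset.sum_eq_zero
    intro y _
    have : y.val ≠ v := fun e => h (e ▸ y.2)
    simp [this]

lemma Mk_apply (x y : St k) :
    Mk k lam gam u x y =
      (if y.val = x.val then u + lam * x.val.1 * x.val.2 + gam * x.val.2 else 0) +
      (if y.val = (x.val.1 - 1, x.val.2 + 1) then -(lam * x.val.1 * x.val.2) else 0) +
      (if y.val = (x.val.1, x.val.2 - 1) then -(gam * x.val.2) else 0) := by
  obtain ⟨⟨s, i⟩, hx⟩ := x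
  obtain ⟨⟨s', i'⟩, hy⟩ := y
  have hi : 1 ≤ i := (mem_Omega.mp hx).2
  simp only [Mk, Matrix.sub_apply, Matrix.smul_apply, Matrix.one_apply, Qmat, smul_eq_mul]
  have hxy : ((⟨(s,i),hx⟩ : St k) = ⟨(s',i'),hy⟩) ↔ ((s',i') = ((s,i) : ℕ × ℕ)) := by
    simp [Subtype.ext_iff, eq_comm]
  simp only [hxy]
  split_ifs with h1 h2 h3 h2 h3 h3
  all_goals simp_all [Prod.ext_iff]
  all_goals try ring
  all_goals (exfalso; omega)

lemma row_sum (x : St k) (f : St k → ℝ) :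
    ∑ y : St k, Mk k lam gam u x y * f y =
      (u + lam * x.val.1 * x.val.2 + gam * x.val.2) * f x +
      (if h : (x.val.1 - 1, x.val.2 + 1) ∈ Omega k then
          -(lam * x.val.1 * x.val.2) * f ⟨_, h⟩ else 0) +
      (if h : (x.val.1, x.val.2 - 1) ∈ Omega k then
          -(gam * x.val.2) * f ⟨_, h⟩ else 0) := by
  simp_rw [Mk_apply, add_mul, Finset.sum_add_distrib, sum_val_eq]
  rw [dif_pos x.2]
  simp only [Subtype.coe_eta]
  ring

end Helpers

section Invert

variable {k : ℕ} {lam gam u : ℝ}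

/-- ordering key -/
def okey (k : ℕ) (x : St k) : ℕ := (x.val.1 + x.val.2) * (k + 1) + x.val.1

lemma okey_inj : Function.Injective (okey k) := by
  intro x y hxy
  have hx := mem_Omega.mp x.2
  have hy := mem_Omega.mp y.2
  simp only [okey] at hxy
  have hab : x.val.1 + x.val.2 = y.val.1 + y.val.2 := by
    by_contra hne
    rcases Nat.lt_or_ge (x.val.1 + x.val.2) (y.val.1 + y.val.2) with h | h
    · have h2 := Nat.mul_le_mul_right (k+1) (show x.val.1 + x.val.2 + 1 ≤ y.val.1 + y.val.2 from h)
      rw [Nat.succ_mul] at h2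
      omega
    · have h' : y.val.1 + y.val.2 + 1 ≤ x.val.1 + x.val.2 := by omega
      have h2 := Nat.mul_le_mul_right (k+1) h'
      rw [Nat.succ_mul] at h2
      omega
  rw [hab] at hxy
  have h1 : x.val.1 = y.val.1 := by omega
  have h2 : x.val.2 = y.val.2 := by omega
  exact Subtype.ext (Prod.ext h1 h2)

lemma Mk_diag (x : St k) :
    Mk k lam gam u x x = u + lam * x.val.1 * x.val.2 + gam * x.val.2 := by
  have hi := (mem_Omega.mp x.2).2
  rw [Mk_apply]
  rw [if_pos rfl, if_neg (by simp [Prod.ext_iff]), if_neg (by simp [Prod.ext_iff]; omega)]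
  ring

/-- order synonym -/
def StO (k : ℕ) := St k

def stEquiv (k : ℕ) : StO k ≃ St k := ⟨fun x => x, fun x => x, fun _ => rfl, fun _ => rfl⟩

noncomputable instance : Fintype (StO k) := inferInstanceAs (Fintype (St k))
instance : DecidableEq (StO k) := inferInstanceAs (DecidableEq (St k))

def okeyO (k : ℕ) (x : StO k) : ℕ := okey k (stEquiv k x)

lemma okeyO_inj : Function.Injective (okeyO k) :=
  fun a b h => (stEquiv k).injective (okey_inj h)

noncomputable instance : LinearOrder (StO k) := LinearOrder.lift' (okeyO k) okeyO_inj

lemma StO_lt_iff (a b : StO k) : a < b ↔ okeyO k a < okeyO k b := Iff.rfl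

lemma Mk_det_ne_zero (hlam : 0 < lam) (hgam : 0 < gam) (hu : 0 ≤ u) :
    (Mk k lam gam u).det ≠ 0 := by
  rw [← Matrix.det_submatrix_equiv_self (stEquiv k) (Mk k lam gam u)]
  set M' := (Mk k lam gam u).submatrix (stEquiv k) (stEquiv k) with hM'
  have htri : M'.BlockTriangular OrderDual.toDual := by
    intro a b hab
    have hfxy : okey k (stEquiv k a) < okey k (stEquiv k b) :=
      (StO_lt_iff a b).mp (OrderDual.toDual_lt_toDual.mp hab)
    set x := stEquiv k a with hxa
    set y := stEquiv k b with hyb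
    have hx := mem_Omega.mp x.2
    have hy := mem_Omega.mp y.2
    show Mk k lam gam u x y = 0
    rw [Mk_apply]
    have e1 : ¬ (y.val = x.val) := by
      intro h
      simp only [okey] at hfxy
      rw [h] at hfxy
      omega
    rw [if_neg e1]
    have key2 : (if y.val = (x.val.1 - 1, x.val.2 + 1) then
        -(lam * x.val.1 * x.val.2) else 0) = 0 := by
      split_ifs with h
      · rcases Nat.eq_zero_or_pos x.val.1 with h0 | h0
        · simp [h0]
        · exfalso
          have hoy : (y.val.1 + y.val.2) * (k+1) + y.val.1 =
              (x.val.1 + x.val.2) * (k+1) + (x.val.1 - 1) := by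
            rw [h]
            congr 2
            omega
          simp only [okey] at hfxy
          omega
      · rfl
    have key3 : (if y.val = (x.val.1, x.val.2 - 1) then -(gam * x.val.2) else 0) = 0 := by
      split_ifs with h
      · exfalso
        have h2 : 1 ≤ x.val.2 := hx.2
        have hoy : (y.val.1 + y.val.2) * (k+1) + y.val.1 =
            (x.val.1 + x.val.2 - 1) * (k+1) + x.val.1 := by
          rw [h]
          congr 2
          omega
        have e2 : (x.val.1 + x.val.2 - 1 + 1) * (k+1) = (x.val.1 + x.val.2) * (k+1) := by
          congr 1
          omega
        rw [Nat.succ_mul] at e2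
        simp only [okey] at hfxy
        omega
      · rfl
    rw [key2, key3]; ring
  rw [Matrix.det_of_lowerTriangular M' htri]
  apply Finset.prod_ne_zero_iff.mpr
  intro a _
  show Mk k lam gam u (stEquiv k a) (stEquiv k a) ≠ 0
  rw [Mk_diag]
  set x := stEquiv k a
  have hi := (mem_Omega.mp x.2).2
  have h1 : (1:ℝ) ≤ (x.val.2 : ℝ) := by exact_mod_cast hi
  positivity

lemma Mk_mul_Qhat (k : ℕ) (lam gam u : ℝ) (hlam : 0 < lam) (hgam : 0 < gam) (hu : 0 ≤ u) :
    Mk k lam gam u * Qhat k lam gam u = 1 := by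
  rw [Qhat_eq_inv]
  exact Matrix.mul_nonsing_inv _ (isUnit_iff_ne_zero.mpr (Mk_det_ne_zero hlam hgam hu))

end Invert

section Afun

variable {k : ℕ} {lam gam u : ℝ}

lemma dpos (hlam : 0 < lam) (hgam : 0 < gam) (hu : 0 ≤ u) {m : ℕ} (hm1 : 1 ≤ m)
    (hm : m ≤ k + 1) :
    0 < u + lam * (((k+1 : ℕ) : ℝ) - (m : ℝ)) * m + gam * m := by
  have h1 : (0:ℝ) ≤ ((k+1 : ℕ) : ℝ) - (m : ℝ) := by
    rw [sub_nonneg]; exact_mod_cast hm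
  have h2 : (1:ℝ) ≤ (m:ℝ) := by exact_mod_cast hm1
  have t2 : 0 ≤ lam * (((k+1 : ℕ) : ℝ) - (m : ℝ)) * m := by
    apply mul_nonneg (mul_nonneg hlam.le h1); linarith
  have t3 : 0 < gam * m := mul_pos hgam (by linarith)
  linarith

lemma rpos (hlam : 0 < lam) {j : ℕ} (hj1 : 1 ≤ j) (hj : j ≤ k) :
    0 < lam * (((k+1 : ℕ) : ℝ) - (j : ℝ)) * j := by
  have h1 : (0:ℝ) < ((k+1 : ℕ) : ℝ) - (j : ℝ) := by
    rw [sub_pos]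
    exact_mod_cast Nat.lt_succ_of_le hj
  have h2 : (1:ℝ) ≤ (j:ℝ) := by exact_mod_cast hj1
  exact mul_pos (mul_pos hlam h1) (by linarith)

lemma afun_rec (hlam : 0 < lam) (hgam : 0 < gam) (hu : 0 ≤ u) (ℓ m : ℕ)
    (hℓ1 : 1 ≤ ℓ) (hℓ : ℓ ≤ k + 1) (hm1 : 1 ≤ m) (hm : m ≤ k + 1) :
    (u + lam * (((k+1 : ℕ) : ℝ) - (ℓ : ℝ)) * ℓ + gam * ℓ) * afun (k+1) lam gam u ℓ m
      - lam * (((k+1 : ℕ) : ℝ) - (ℓ : ℝ)) * ℓ * afun (k+1) lam gam u (ℓ+1) m =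
    if ℓ = m then 1 else 0 := by
  have hdℓ := dpos hlam hgam hu hℓ1 hℓ (k := k)
  have hdm := dpos hlam hgam hu hm1 hm (k := k)
  rcases lt_trichotomy ℓ m with hlt | heq | hgt
  · -- ℓ < m
    have hℓk : ℓ ≤ k := by omega
    have hrℓ := rpos hlam hℓ1 hℓk (k := k)
    have hins : Finset.Icc ℓ (m-1) = insert ℓ (Finset.Icc (ℓ+1) (m-1)) := by
      ext j
      simp only [Finset.mem_Icc, Finset.mem_insert]
      omega
    have gfac : ∀ (r c : ℝ), r ≠ 0 → (1 + c/r)⁻¹ = r / (r + c) := by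
      intro r c hr
      rw [show 1 + c/r = (r + c)/r from by field_simp, inv_div]
    have hfac : (1 + (u + gam * (ℓ : ℝ)) /
        (lam * (((k+1 : ℕ) : ℝ) - (ℓ : ℝ)) * ℓ))⁻¹ =
        lam * (((k+1 : ℕ) : ℝ) - (ℓ : ℝ)) * ℓ /
          (u + lam * (((k+1 : ℕ) : ℝ) - (ℓ : ℝ)) * ℓ + gam * ℓ) := by
      rw [gfac _ _ (ne_of_gt hrℓ)]
      congr 1
      ring
    have hsplit : afun (k+1) lam gam u ℓ m =
        (lam * (((k+1 : ℕ) : ℝ) - (ℓ : ℝ)) * ℓ /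
          (u + lam * (((k+1 : ℕ) : ℝ) - (ℓ : ℝ)) * ℓ + gam * ℓ)) *
          afun (k+1) lam gam u (ℓ+1) m := by
      unfold afun
      rw [if_pos (by omega : ℓ ≤ m), if_pos (by omega : ℓ + 1 ≤ m)]
      rw [hins, Finset.prod_insert (by simp), hfac]
      ring
    rw [hsplit, if_neg (by omega : ¬ ℓ = m)]
    have key : ∀ (d r A : ℝ), d ≠ 0 → d * (r / d * A) - r * A = 0 := by
      intro d r A hd; field_simp; ring
    exact key _ _ _ (ne_of_gt hdℓ)
  · -- ℓ = m
    subst heq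
    rw [if_pos rfl]
    have h1 : afun (k+1) lam gam u ℓ ℓ =
        (u + lam * (((k+1 : ℕ) : ℝ) - (ℓ : ℝ)) * ℓ + gam * ℓ)⁻¹ := by
      unfold afun
      rw [if_pos le_rfl, Finset.Icc_eq_empty (by omega), Finset.prod_empty]
      ring
    have h2 : afun (k+1) lam gam u (ℓ+1) ℓ = 0 := by
      unfold afun
      rw [if_neg (by omega)]
      ring
    rw [h1, h2]
    rw [mul_inv_cancel₀ (ne_of_gt hdℓ)]
    ring
  · -- m < ℓ
    have h1 : afun (k+1) lam gam u ℓ m = 0 := by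
      unfold afun; rw [if_neg (by omega)]; ring
    have h2 : afun (k+1) lam gam u (ℓ+1) m = 0 := by
      unfold afun; rw [if_neg (by omega)]; ring
    rw [h1, h2, if_neg (by omega)]
    ring

end Afun

section Main

variable {k : ℕ} {lam gam u : ℝ}

/-- entry of `Qhat k` from the state `(k+1-w, w-1)`. -/
noncomputable def Qrow (k : ℕ) (lam gam u : ℝ) (w : ℕ) (z : St k) : ℝ :=
  if hw : (k + 1 - w, w - 1) ∈ Omega k then Qhat k lam gam u ⟨_, hw⟩ z else 0

/-- candidate inverse for `Mk (k+1)` -/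
noncomputable def Nmat (k : ℕ) (lam gam u : ℝ) : Matrix (St (k+1)) (St (k+1)) ℝ :=
  fun x z =>
    if hx : x.val ∈ Omega k then
      (if hz : z.val ∈ Omega k then Qhat k lam gam u ⟨x.val, hx⟩ ⟨z.val, hz⟩ else 0)
    else
      (if hz : z.val ∈ Omega k then
        ∑ w ∈ Finset.Icc 2 (k+1),
          afun (k+1) lam gam u x.val.2 w * (gam * w) * Qrow k lam gam u w ⟨z.val, hz⟩
      else afun (k+1) lam gam u x.val.2 z.val.2)

lemma Nmat_ll {v : ℕ × ℕ} (h1 : v ∈ Omega (k+1)) (h0 : v ∈ Omega k) {z : St (k+1)}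
    (hz : z.val ∈ Omega k) :
    Nmat k lam gam u ⟨v, h1⟩ z = Qhat k lam gam u ⟨v, h0⟩ ⟨z.val, hz⟩ := by
  simp only [Nmat]
  rw [dif_pos h0, dif_pos hz]

lemma Nmat_lt {v : ℕ × ℕ} (h1 : v ∈ Omega (k+1)) (h0 : v ∈ Omega k) {z : St (k+1)}
    (hz : z.val ∉ Omega k) :
    Nmat k lam gam u ⟨v, h1⟩ z = 0 := by
  simp only [Nmat]
  rw [dif_pos h0, dif_neg hz]

lemma Nmat_tl {v : ℕ × ℕ} (h1 : v ∈ Omega (k+1)) (h0 : v ∉ Omega k) {z : St (k+1)}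
    (hz : z.val ∈ Omega k) :
    Nmat k lam gam u ⟨v, h1⟩ z =
      ∑ w ∈ Finset.Icc 2 (k+1),
        afun (k+1) lam gam u v.2 w * (gam * w) * Qrow k lam gam u w ⟨z.val, hz⟩ := by
  simp only [Nmat]
  rw [dif_neg h0, dif_pos hz]

lemma Nmat_tt {v : ℕ × ℕ} (h1 : v ∈ Omega (k+1)) (h0 : v ∉ Omega k) {z : St (k+1)}
    (hz : z.val ∉ Omega k) :
    Nmat k lam gam u ⟨v, h1⟩ z = afun (k+1) lam gam u v.2 z.val.2 := by
  simp only [Nmat]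
  rw [dif_neg h0, dif_neg hz]

lemma Ssum_rec (hlam : 0 < lam) (hgam : 0 < gam) (hu : 0 ≤ u) (z : St k) (ℓ : ℕ)
    (hℓ1 : 1 ≤ ℓ) (hℓ : ℓ ≤ k + 1) :
    (u + lam * (((k+1 : ℕ) : ℝ) - (ℓ : ℝ)) * ℓ + gam * ℓ) *
        (∑ w ∈ Finset.Icc 2 (k+1),
          afun (k+1) lam gam u ℓ w * (gam * w) * Qrow k lam gam u w z)
      - lam * (((k+1 : ℕ) : ℝ) - (ℓ : ℝ)) * ℓ *
        (∑ w ∈ Finset.Icc 2 (k+1),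
          afun (k+1) lam gam u (ℓ+1) w * (gam * w) * Qrow k lam gam u w z) =
    if 2 ≤ ℓ then gam * ℓ * Qrow k lam gam u ℓ z else 0 := by
  rw [Finset.mul_sum, Finset.mul_sum, ← Finset.sum_sub_distrib]
  have hcongr : ∀ w ∈ Finset.Icc 2 (k+1),
      (u + lam * (((k+1 : ℕ) : ℝ) - (ℓ : ℝ)) * ℓ + gam * ℓ) *
          (afun (k+1) lam gam u ℓ w * (gam * w) * Qrow k lam gam u w z)
        - lam * (((k+1 : ℕ) : ℝ) - (ℓ : ℝ)) * ℓ *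
          (afun (k+1) lam gam u (ℓ+1) w * (gam * w) * Qrow k lam gam u w z) =
      if ℓ = w then gam * w * Qrow k lam gam u w z else 0 := by
    intro w hw
    have hw' := Finset.mem_Icc.mp hw
    have h := afun_rec hlam hgam hu ℓ w hℓ1 hℓ (by omega) hw'.2
    calc (u + lam * (((k+1 : ℕ) : ℝ) - (ℓ : ℝ)) * ℓ + gam * ℓ) *
          (afun (k+1) lam gam u ℓ w * (gam * w) * Qrow k lam gam u w z)
        - lam * (((k+1 : ℕ) : ℝ) - (ℓ : ℝ)) * ℓ *
          (afun (k+1) lam gam u (ℓ+1) w * (gam * w) * Qrow k lam gam u w z)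
        = ((u + lam * (((k+1 : ℕ) : ℝ) - (ℓ : ℝ)) * ℓ + gam * ℓ) * afun (k+1) lam gam u ℓ w
            - lam * (((k+1 : ℕ) : ℝ) - (ℓ : ℝ)) * ℓ * afun (k+1) lam gam u (ℓ+1) w) *
            (gam * w * Qrow k lam gam u w z) := by ring
      _ = _ := by rw [h]; split_ifs <;> ring
  rw [Finset.sum_congr rfl hcongr]
  rw [Finset.sum_ite_eq (Finset.Icc 2 (k+1)) ℓ
    (fun w => gam * w * Qrow k lam gam u w z)]
  exact if_congr (by rw [Finset.mem_Icc]; omega) rfl rfl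

lemma Mk_mul_N (hlam : 0 < lam) (hgam : 0 < gam) (hu : 0 ≤ u) :
    Mk (k+1) lam gam u * Nmat k lam gam u = 1 := by
  ext x z
  obtain ⟨⟨s, i⟩, hx1⟩ := x
  obtain ⟨zv, hz1⟩ := z
  rw [Matrix.mul_apply]
  rw [row_sum (⟨(s, i), hx1⟩ : St (k+1)) (fun y => Nmat k lam gam u y ⟨zv, hz1⟩)]
  dsimp only []
  have hxm := mem_Omega.mp hx1
  dsimp only [] at hxm
  have hone : (1 : Matrix (St (k+1)) (St (k+1)) ℝ) ⟨(s, i), hx1⟩ ⟨zv, hz1⟩ =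
      if ((s, i) : ℕ × ℕ) = zv then 1 else 0 := by
    simp [Matrix.one_apply, Subtype.ext_iff]
  rw [hone]
  by_cases hx : ((s, i) : ℕ × ℕ) ∈ Omega k
  · -- x in lower block
    have hxk := mem_Omega.mp hx
    dsimp only [] at hxk
    by_cases hz : zv ∈ Omega k
    · -- both lower: reduces to level-k identity
      have hQ := congrFun (congrFun (Mk_mul_Qhat k lam gam u hlam hgam hu) ⟨(s, i), hx⟩)
        ⟨zv, hz⟩
      rw [Matrix.mul_apply,
        row_sum (⟨(s, i), hx⟩ : St k) (fun y => Qhat k lam gam u y ⟨zv, hz⟩)] at hQ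
      dsimp only [] at hQ
      rw [Nmat_ll hx1 hx hz]
      have einf : (if h : ((s - 1, i + 1) : ℕ × ℕ) ∈ Omega (k+1) then
            -(lam * (s : ℝ) * i) * Nmat k lam gam u ⟨(s - 1, i + 1), h⟩ ⟨zv, hz1⟩ else 0) =
          (if h : ((s - 1, i + 1) : ℕ × ℕ) ∈ Omega k then
            -(lam * (s : ℝ) * i) * Qhat k lam gam u ⟨(s - 1, i + 1), h⟩ ⟨zv, hz⟩ else 0) := by
        rcases Nat.eq_zero_or_pos s with h0 | h0
        · have hc : (s : ℝ) = 0 := by rw [h0]; simp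
          split_ifs <;> simp [hc]
        · have hm0 : ((s - 1, i + 1) : ℕ × ℕ) ∈ Omega k :=
            mem_Omega.mpr ⟨by dsimp only []; omega, by dsimp only []; omega⟩
          have hm1 : ((s - 1, i + 1) : ℕ × ℕ) ∈ Omega (k+1) :=
            mem_Omega.mpr ⟨by dsimp only []; omega, by dsimp only []; omega⟩
          rw [dif_pos hm1, dif_pos hm0, Nmat_ll hm1 hm0 hz]
      have erec : (if h : ((s, i - 1) : ℕ × ℕ) ∈ Omega (k+1) then
            -(gam * (i : ℝ)) * Nmat k lam gam u ⟨(s, i - 1), h⟩ ⟨zv, hz1⟩ else 0) =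
          (if h : ((s, i - 1) : ℕ × ℕ) ∈ Omega k then
            -(gam * (i : ℝ)) * Qhat k lam gam u ⟨(s, i - 1), h⟩ ⟨zv, hz⟩ else 0) := by
        by_cases h2 : 2 ≤ i
        · have hm0 : ((s, i - 1) : ℕ × ℕ) ∈ Omega k :=
            mem_Omega.mpr ⟨by dsimp only []; omega, by dsimp only []; omega⟩
          have hm1 : ((s, i - 1) : ℕ × ℕ) ∈ Omega (k+1) :=
            mem_Omega.mpr ⟨by dsimp only []; omega, by dsimp only []; omega⟩
          rw [dif_pos hm1, dif_pos hm0, Nmat_ll hm1 hm0 hz]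
        · have hm0 : ((s, i - 1) : ℕ × ℕ) ∉ Omega k := by
            intro hm
            have := mem_Omega.mp hm
            dsimp only [] at this
            omega
          have hm1 : ((s, i - 1) : ℕ × ℕ) ∉ Omega (k+1) := by
            intro hm
            have := mem_Omega.mp hm
            dsimp only [] at this
            omega
          rw [dif_neg hm1, dif_neg hm0]
      rw [einf, erec, hQ]
      simp [Matrix.one_apply, Subtype.ext_iff]
    · -- x lower, z top: everything vanishes
      rw [Nmat_lt hx1 hx hz]
      have einf : (if h : ((s - 1, i + 1) : ℕ × ℕ) ∈ Omega (k+1) then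
            -(lam * (s : ℝ) * i) * Nmat k lam gam u ⟨(s - 1, i + 1), h⟩ ⟨zv, hz1⟩ else 0) = 0 := by
        split_ifs with h
        · rcases Nat.eq_zero_or_pos s with h0 | h0
          · have hc : (s : ℝ) = 0 := by rw [h0]; simp
            simp [hc]
          · have hm0 : ((s - 1, i + 1) : ℕ × ℕ) ∈ Omega k :=
              mem_Omega.mpr ⟨by dsimp only []; omega, by dsimp only []; omega⟩
            rw [Nmat_lt h hm0 hz]
            ring
        · rfl
      have erec : (if h : ((s, i - 1) : ℕ × ℕ) ∈ Omega (k+1) then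
            -(gam * (i : ℝ)) * Nmat k lam gam u ⟨(s, i - 1), h⟩ ⟨zv, hz1⟩ else 0) = 0 := by
        split_ifs with h
        · have hh := mem_Omega.mp h
          dsimp only [] at hh
          have hm0 : ((s, i - 1) : ℕ × ℕ) ∈ Omega k :=
            mem_Omega.mpr ⟨by dsimp only []; omega, by dsimp only []; omega⟩
          rw [Nmat_lt h hm0 hz]
          ring
        · rfl
      rw [einf, erec]
      have hne : ((s, i) : ℕ × ℕ) ≠ zv := fun e => hz (e ▸ hx)
      rw [if_neg hne]
      ring
  · -- x top layer
    have hsum : s + i = k + 1 := by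
      have : ¬ (s + i ≤ k ∧ 1 ≤ i) := fun h => hx (mem_Omega.mpr h)
      omega
    have hc : (s : ℝ) = ((k+1 : ℕ) : ℝ) - (i : ℝ) := by
      rw [show s = (k+1) - i from by omega, Nat.cast_sub (by omega)]
    rw [hc]
    by_cases hz : zv ∈ Omega k
    · -- x top, z lower
      have hzk := mem_Omega.mp hz
      rw [Nmat_tl hx1 hx hz]
      dsimp only []
      have hS := Ssum_rec hlam hgam hu (⟨zv, hz⟩ : St k) i (by omega) (by omega)
      have erec : (if h : ((s, i - 1) : ℕ × ℕ) ∈ Omega (k+1) then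
            -(gam * (i : ℝ)) * Nmat k lam gam u ⟨(s, i - 1), h⟩ ⟨zv, hz1⟩ else 0) =
          -(if 2 ≤ i then gam * (i:ℝ) * Qrow k lam gam u i ⟨zv, hz⟩ else 0) := by
        by_cases h2 : 2 ≤ i
        · have hm0 : ((s, i - 1) : ℕ × ℕ) ∈ Omega k :=
            mem_Omega.mpr ⟨by dsimp only []; omega, by dsimp only []; omega⟩
          have hm1 : ((s, i - 1) : ℕ × ℕ) ∈ Omega (k+1) :=
            mem_Omega.mpr ⟨by dsimp only []; omega, by dsimp only []; omega⟩
          rw [dif_pos hm1, Nmat_ll hm1 hm0 hz, if_pos h2]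
          have hqr : Qrow k lam gam u i (⟨zv, hz⟩ : St k) =
              Qhat k lam gam u ⟨(s, i - 1), hm0⟩ ⟨zv, hz⟩ := by
            unfold Qrow
            have hm0' : ((k + 1 - i, i - 1) : ℕ × ℕ) ∈ Omega k := by
              rw [show ((k + 1 - i, i - 1) : ℕ × ℕ) = (s, i - 1) from by
                rw [show k + 1 - i = s from by omega]]
              exact hm0
            rw [dif_pos hm0']
            congr 1
            exact Subtype.ext (by dsimp only []; rw [show k + 1 - i = s from by omega])
          rw [hqr]
          ring
        · have hm1 : ((s, i - 1) : ℕ × ℕ) ∉ Omega (k+1) := by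
            intro hm
            have := mem_Omega.mp hm
            dsimp only [] at this
            omega
          rw [dif_neg hm1, if_neg h2]
          ring
      have einf : (if h : ((s - 1, i + 1) : ℕ × ℕ) ∈ Omega (k+1) then
            -(lam * (((k+1 : ℕ) : ℝ) - (i : ℝ)) * i) *
              Nmat k lam gam u ⟨(s - 1, i + 1), h⟩ ⟨zv, hz1⟩ else 0) =
          -(lam * (((k+1 : ℕ) : ℝ) - (i : ℝ)) * i) *
            (∑ w ∈ Finset.Icc 2 (k+1),
              afun (k+1) lam gam u (i+1) w * (gam * w) * Qrow k lam gam u w ⟨zv, hz⟩) := by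
        by_cases hik : i ≤ k
        · have hm1 : ((s - 1, i + 1) : ℕ × ℕ) ∈ Omega (k+1) :=
            mem_Omega.mpr ⟨by dsimp only []; omega, by dsimp only []; omega⟩
          have hm0 : ((s - 1, i + 1) : ℕ × ℕ) ∉ Omega k := by
            intro hm
            have := mem_Omega.mp hm
            dsimp only [] at this
            omega
          rw [dif_pos hm1, Nmat_tl hm1 hm0 hz]
        · have hm1 : ((s - 1, i + 1) : ℕ × ℕ) ∉ Omega (k+1) := by
            intro hm
            have := mem_Omega.mp hm
            dsimp only [] at this
            omega
          rw [dif_neg hm1]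
          have hc0 : ((k+1 : ℕ) : ℝ) - (i : ℝ) = 0 := by
            rw [show i = k + 1 from by omega]
            simp
          rw [hc0]
          ring
      rw [erec, einf]
      have hne : ((s, i) : ℕ × ℕ) ≠ zv := fun e => hx (e ▸ hz)
      rw [if_neg hne]
      linarith [hS]
    · -- x top, z top
      have hzm := mem_Omega.mp hz1
      have hzsum : zv.1 + zv.2 = k + 1 := by
        have : ¬ (zv.1 + zv.2 ≤ k ∧ 1 ≤ zv.2) := fun h => hz (mem_Omega.mpr h)
        omega
      rw [Nmat_tt hx1 hx hz]
      dsimp only []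
      have hrec := afun_rec (k := k) hlam hgam hu i zv.2 (by omega) (by omega)
        (by omega) (by omega)
      have erec : (if h : ((s, i - 1) : ℕ × ℕ) ∈ Omega (k+1) then
            -(gam * (i : ℝ)) * Nmat k lam gam u ⟨(s, i - 1), h⟩ ⟨zv, hz1⟩ else 0) = 0 := by
        split_ifs with h
        · have hh := mem_Omega.mp h
          dsimp only [] at hh
          have hm0 : ((s, i - 1) : ℕ × ℕ) ∈ Omega k :=
            mem_Omega.mpr ⟨by dsimp only []; omega, by dsimp only []; omega⟩
          rw [Nmat_lt h hm0 hz]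
          ring
        · rfl
      have hiff : (((s, i) : ℕ × ℕ) = zv) ↔ (i = zv.2) := by
        constructor
        · intro h
          rw [← h]
        · intro h
          have h1 : s = zv.1 := by omega
          rw [show zv = (zv.1, zv.2) from rfl, ← h1, ← h]
      rw [erec, show (if ((s, i) : ℕ × ℕ) = zv then (1:ℝ) else 0) =
        (if i = zv.2 then (1:ℝ) else 0) from if_congr hiff rfl rfl]
      by_cases hik : i ≤ k
      · have hm1 : ((s - 1, i + 1) : ℕ × ℕ) ∈ Omega (k+1) :=
          mem_Omega.mpr ⟨by dsimp only []; omega, by dsimp only []; omega⟩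
        have hm0 : ((s - 1, i + 1) : ℕ × ℕ) ∉ Omega k := by
          intro hm
          have := mem_Omega.mp hm
          dsimp only [] at this
          omega
        rw [dif_pos hm1, Nmat_tt hm1 hm0 hz]
        dsimp only []
        rw [← hrec]
        ring
      · have hm1 : ((s - 1, i + 1) : ℕ × ℕ) ∉ Omega (k+1) := by
          intro hm
          have := mem_Omega.mp hm
          dsimp only [] at this
          omega
        rw [dif_neg hm1]
        have hc0 : ((k+1 : ℕ) : ℝ) - (i : ℝ) = 0 := by
          rw [show i = k + 1 from by omega]
          simp
        rw [hc0] at hrec ⊢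
        rw [← hrec]
        ring

end Main

lemma Qhat_eq_Nmat {k : ℕ} {lam gam u : ℝ} (hlam : 0 < lam) (hgam : 0 < gam) (hu : 0 ≤ u) :
    Qhat (k+1) lam gam u = Nmat k lam gam u := by
  rw [Qhat_eq_inv]
  exact Matrix.inv_eq_right_inv (Mk_mul_N hlam hgam hu)

/-- block description of the resolvent `Q̂_{k+1,λ,γ}(u)`.
(a) Its entries between states of `Ω(k+1)` with `s + i = k + 1` are given by
`a^{(k+1)}_{ℓ,i}(u)`; (b) its entries from such states towards states of `Ω(k)` are
`Σ_{w=2}^{k+1} a^{(k+1)}_{ℓ,w}(u) γ w (Q̂_{k,λ,γ}(u))_{(k+1−w,w−1),(s,i)}`. -/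
theorem statement6 (k : ℕ) (hk : 1 ≤ k) (lam gam u : ℝ) (hlam : 0 < lam) (hgam : 0 < gam)
    (hu : 0 ≤ u) (ℓ : ℕ) (hℓ1 : 1 ≤ ℓ) (hℓk : ℓ ≤ k + 1) :
    (∀ i : ℕ, ∀ hi1 : 1 ≤ i, ∀ hik : i ≤ k + 1,
      Qhat (k + 1) lam gam u ⟨(k + 1 - ℓ, ℓ), pair_mem_Omega (by omega) hℓ1⟩
          ⟨(k + 1 - i, i), pair_mem_Omega (by omega) hi1⟩ =
        afun (k + 1) lam gam u ℓ i) ∧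
    (∀ s i : ℕ, ∀ hsi : (s, i) ∈ Omega k,
      Qhat (k + 1) lam gam u ⟨(k + 1 - ℓ, ℓ), pair_mem_Omega (by omega) hℓ1⟩
          ⟨(s, i), pair_mem_Omega
            (le_trans (mem_Omega'.mp hsi).1 (Nat.le_succ k)) (mem_Omega'.mp hsi).2⟩ =
        ∑ w ∈ (Finset.Icc 2 (k + 1)).attach,
          afun (k + 1) lam gam u ℓ w.val * (gam * (w.val : ℝ)) *
            Qhat k lam gam u
              ⟨(k + 1 - w.val, w.val - 1),
                pair_mem_Omega (by have := Finset.mem_Icc.mp w.2; omega)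
                  (by have := Finset.mem_Icc.mp w.2; omega)⟩
              ⟨(s, i), hsi⟩) := by
  have hxnot : ((k + 1 - ℓ, ℓ) : ℕ × ℕ) ∉ Omega k := by
    intro h
    have := mem_Omega.mp h
    dsimp only [] at this
    omega
  constructor
  · intro i hi1 hik
    rw [Qhat_eq_Nmat hlam hgam hu]
    have hznot : ((k + 1 - i, i) : ℕ × ℕ) ∉ Omega k := by
      intro h
      have := mem_Omega.mp h
      dsimp only [] at this
      omega
    rw [Nmat_tt _ hxnot hznot]
  · intro s i hsi
    rw [Qhat_eq_Nmat hlam hgam hu]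
    rw [Nmat_tl _ hxnot hsi]
    dsimp only []
    rw [← Finset.sum_attach (Finset.Icc 2 (k+1))
      (fun w => afun (k+1) lam gam u ℓ w * (gam * (w : ℝ)) *
        Qrow k lam gam u w ⟨(s, i), hsi⟩)]
    apply Finset.sum_congr rfl
    intro w _
    have hw := Finset.mem_Icc.mp w.2
    have hmem : ((k + 1 - (w : ℕ), (w : ℕ) - 1) : ℕ × ℕ) ∈ Omega k :=
      mem_Omega.mpr ⟨by dsimp only []; omega, by dsimp only []; omega⟩
    unfold Qrow
    rw [dif_pos hmem]
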